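/- Let b ≥ 2 and τ ∈ {τ^b_2, τ^b_3}, set E_0 = {(m,m) : 1 ≤ m ≤ b} ∪ {0}, and let φ be an instance of cubic monotone one-in-three 3-SAT with m clauses. If (sup, sig) is a τ-region of the translator T_τ such that sig(z) ∈ E_0 and sig(k) ∈ {(0,1), (1,0)}, then φ has a one-in-three model. -/

import Mathlib

/-! ## Transition systems -/

/-- A transition system over ambient state type `S` and event type `E`:
a set of states, a set of events, and a (deterministic or not) labeled
transition relation whose transitions stay inside the state/event sets. -/
structure TS (S E : Type) where
  states : Set S
  events : Set E
  tr : S → E → S → Prop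
  tr_mem : ∀ ⦃s e s'⦄, tr s e s' → s ∈ states ∧ e ∈ events ∧ s' ∈ states

/-- Event `e` occurs at state `s`. -/
def TS.occurs {S E : Type} (A : TS S E) (e : E) (s : S) : Prop := ∃ s', A.tr s e s'

/-! ## The types of nets `τ^b_t`, `t ∈ {0,1,2,3}` -/

/-- Events of the types of nets: pairs `(m,n)` or group events `c ∈ ℤ_{b+1}`. -/
inductive Tev where
  | pr (m n : ℕ)
  | gr (c : ℕ)
deriving DecidableEq

def Tev.minus : Tev → ℕ | .pr m _ => m | .gr _ => 0
def Tev.plus : Tev → ℕ | .pr _ n => n | .gr _ => 0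
def Tev.absv : Tev → ℕ | .pr _ _ => 0 | .gr c => c

/-- Membership in the event set of the type `τ^b_t`:
for `t ∈ {1,3}` (pure types) the pair events `(m,n)` with `m,n ≥ 1` are discarded;
for `t ∈ {2,3}` the pair `(0,0)` is discarded and the group events `0,…,b` are present;
for `t ∈ {0,1}` there are no group events. -/
def tevOk (b t : ℕ) : Tev → Prop
  | .pr m n => m ≤ b ∧ n ≤ b ∧ ((t = 1 ∨ t = 3) → (m = 0 ∨ n = 0)) ∧
      ((t = 2 ∨ t = 3) → ¬(m = 0 ∧ n = 0))
  | .gr c => c ≤ b ∧ (t = 2 ∨ t = 3)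

/-- The partial transition function of the types `τ^b_t` on the states `{0,…,b}`. -/
def tevStep (b s : ℕ) : Tev → Option ℕ
  | .pr m n => if m ≤ s ∧ s - m + n ≤ b then some (s - m + n) else none
  | .gr c => some ((s + c) % (b + 1))

/-! ## Regions, ESSP and SSP -/

/-- A `τ^b_t`-region of a transition system `A`. -/
structure Region (b t : ℕ) {S E : Type} (A : TS S E) where
  sup : S → ℕ
  sig : E → Tev
  sup_le : ∀ s ∈ A.states, sup s ≤ b
  sig_ok : ∀ e ∈ A.events, tevOk b t (sig e)
  resp : ∀ ⦃s e s'⦄, A.tr s e s' → tevStep b (sup s) (sig e) = some (sup s')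

/-- A region solves the ESSP atom `(e,s)` if `sig e` does not occur at `sup s` in `τ`. -/
def Region.solvesESSP {b t : ℕ} {S E : Type} {A : TS S E} (R : Region b t A)
    (e : E) (s : S) : Prop :=
  tevStep b (R.sup s) (R.sig e) = none

/-- A region solves the SSP atom `(s,s')` if `sup s ≠ sup s'`. -/
def Region.solvesSSP {b t : ℕ} {S E : Type} {A : TS S E} (R : Region b t A)
    (s s' : S) : Prop :=
  R.sup s ≠ R.sup s'

/-- `A` has the `τ^b_t`-ESSP: every ESSP atom is solvable. -/
def TS.hasESSP (b t : ℕ) {S E : Type} (A : TS S E) : Prop :=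
  ∀ e ∈ A.events, ∀ s ∈ A.states, ¬ A.occurs e s → ∃ R : Region b t A, R.solvesESSP e s

/-- `A` has the `τ^b_t`-SSP: every SSP atom is solvable. -/
def TS.hasSSP (b t : ℕ) {S E : Type} (A : TS S E) : Prop :=
  ∀ s ∈ A.states, ∀ s' ∈ A.states, s ≠ s' → ∃ R : Region b t A, R.solvesSSP s s'

/-- `A` is `τ^b_t`-feasible. -/
def TS.feasible (b t : ℕ) {S E : Type} (A : TS S E) : Prop :=
  A.hasESSP b t ∧ A.hasSSP b t

/-! ## Combinators: linear TSs, relabeled states, unions -/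

/-- The linear TS given by the word `w`: states `0,…,w.length`, and an
`e`-labeled transition from `s` to `s+1` whenever `w[s] = e`. -/
def TS.chain {E : Type} (w : List E) : TS ℕ E where
  states := {s | s ≤ w.length}
  events := {e | e ∈ w}
  tr s e s' := w[s]? = some e ∧ s' = s + 1
  tr_mem := by
    rintro s e s' ⟨h, rfl⟩
    have hs : s < w.length := by
      by_contra hc
      rw [List.getElem?_eq_none (Nat.le_of_not_lt hc)] at h
      cases h
    obtain ⟨hlt, rfl⟩ := List.getElem?_eq_some_iff.mp h
    exact ⟨Nat.le_of_lt hs, List.getElem_mem hlt, hs⟩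

/-- Renaming the states of a TS along `f`. -/
def TS.mapStates {S S' E : Type} (f : S → S') (A : TS S E) : TS S' E where
  states := f '' A.states
  events := A.events
  tr s e s' := ∃ a a', A.tr a e a' ∧ s = f a ∧ s' = f a'
  tr_mem := by
    rintro s e s' ⟨a, a', h, rfl, rfl⟩
    obtain ⟨h1, h2, h3⟩ := A.tr_mem h
    exact ⟨⟨a, h1, rfl⟩, h2, ⟨a', h3, rfl⟩⟩

/-- The union `U(A_i)_{i : ι}` of a family of TSs over the same ambient types. -/
def TS.unionFam {ι S E : Type} (F : ι → TS S E) : TS S E where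
  states := ⋃ i, (F i).states
  events := ⋃ i, (F i).events
  tr s e s' := ∃ i, (F i).tr s e s'
  tr_mem := by
    rintro s e s' ⟨i, h⟩
    obtain ⟨h1, h2, h3⟩ := (F i).tr_mem h
    exact ⟨Set.mem_iUnion.2 ⟨i, h1⟩, Set.mem_iUnion.2 ⟨i, h2⟩, Set.mem_iUnion.2 ⟨i, h3⟩⟩

/-- The SSP for a union: all SSP atoms given by distinct states of the *same*
constituent are solvable by regions of the union. -/
def unionSSP (b t : ℕ) {ι S E : Type} (F : ι → TS S E) : Prop :=
  ∀ i : ι, ∀ s ∈ (F i).states, ∀ s' ∈ (F i).states, s ≠ s' →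
    ∃ R : Region b t (TS.unionFam F), R.solvesSSP s s'
/-! ## Cubic monotone one-in-three 3-SAT -/

/-- An instance `φ = {C_0,…,C_{m-1}}` of cubic monotone one-in-three 3-SAT with
variables `V(φ) = {X_0,…,X_{m-1}}` (identified with `Fin m`): every clause
`C_i = {X_{i,0}, X_{i,1}, X_{i,2}}` consists of three distinct variables and every
variable occurs in exactly three clauses. -/
structure SatInstance (m : ℕ) where
  C : Fin m → Fin 3 → Fin m
  clause_distinct : ∀ i : Fin m, Function.Injective (C i)
  cubic : ∀ v : Fin m,
    (Finset.univ.filter (fun p : Fin m × Fin 3 => C p.1 p.2 = v)).card = 3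

/-- `M` is a one-in-three model of `φ`: every clause contains exactly one variable of `M`. -/
def SatInstance.model {m : ℕ} (φ : SatInstance m) (M : Set (Fin m)) : Prop :=
  ∀ i : Fin m, ∃! r : Fin 3, φ.C i r ∈ M

/-! ## Events of the gadgets -/

inductive Ev where
  | k | z | z0 | z1 | o0 | o1 | o2 | u
  | kj (j : ℕ)  -- the interface events k_j
  | x (i : ℕ)   -- the events x_i
  | p (i : ℕ)   -- the events p_i
  | vj (j : ℕ)  -- the events v_j
  | X (v : ℕ)   -- the variable events X_v
deriving DecidableEq

/-! ## The gadget TSs (states are pairs (tag, position)) -/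

/-- `H_0`, with `h_{0,i} = (0,i)`. -/
def H0 (b : ℕ) : TS (ℕ × ℕ) Ev :=
  (TS.chain (List.replicate b Ev.k ++ List.replicate b Ev.z ++ [Ev.o0] ++
    List.replicate b Ev.k ++ List.replicate b Ev.z ++ List.replicate b Ev.o1 ++
    List.replicate b Ev.k)).mapStates (fun i => (0, i))

/-- `H_1`, with `h_{1,i} = (0,i)`. -/
def H1 (b : ℕ) : TS (ℕ × ℕ) Ev :=
  (TS.chain (List.replicate b Ev.k ++ [Ev.z0, Ev.o0] ++ List.replicate b Ev.k ++
    [Ev.z1, Ev.z0, Ev.o2] ++ List.replicate b Ev.k)).mapStates (fun i => (0, i))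

/-- `H_2`, with `h_{2,i} = (0,i)`. -/
def H2 (b : ℕ) : TS (ℕ × ℕ) Ev :=
  (TS.chain (List.replicate b Ev.k ++ [Ev.o0] ++ List.replicate b Ev.k ++
    [Ev.o2] ++ List.replicate b Ev.k)).mapStates (fun i => (0, i))

/-- `D_{j,0}`, with `d_{j,0,i} = (j+1,i)`. -/
def D0 (b j : ℕ) : TS (ℕ × ℕ) Ev :=
  (TS.chain ([Ev.o0, Ev.kj j] ++ List.replicate (b+1) Ev.o1)).mapStates
    (fun i => (j + 1, i))

/-- `D_{j,1}`, with `d_{j,1,i} = (j+1,i)`. -/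
def D1 (b j : ℕ) : TS (ℕ × ℕ) Ev :=
  (TS.chain [Ev.o0, Ev.kj j, Ev.o2]).mapStates (fun i => (j + 1, i))

/-- The word of the gadget `T_{i,a}` (`a ∈ {0,1,2}`) of the translator `T`. -/
def Tword (b : ℕ) {m : ℕ} (φ : SatInstance m) (i : Fin m) (a : Fin 3) : List Ev :=
  if a = 0 then
    [Ev.kj (6 * (i : ℕ))] ++ List.replicate b (Ev.X ((φ.C i 0 : Fin m) : ℕ)) ++
    [Ev.x (i : ℕ)] ++ List.replicate b (Ev.X ((φ.C i 2 : Fin m) : ℕ)) ++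
    [Ev.kj (6 * (i : ℕ) + 1)]
  else if a = 1 then
    [Ev.kj (6 * (i : ℕ) + 2)] ++ List.replicate b (Ev.X ((φ.C i 1 : Fin m) : ℕ)) ++
    [Ev.p (i : ℕ), Ev.kj (6 * (i : ℕ) + 3)]
  else
    [Ev.kj (6 * (i : ℕ) + 4), Ev.x (i : ℕ), Ev.p (i : ℕ), Ev.kj (6 * (i : ℕ) + 5)]

/-- The gadget `T_{i,a}` of the translator `T`, with states `t_{i,a,pos} = (tag, pos)`. -/
def Tgad (b tag : ℕ) {m : ℕ} (φ : SatInstance m) (i : Fin m) (a : Fin 3) :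
    TS (ℕ × ℕ) Ev :=
  (TS.chain (Tword b φ i a)).mapStates (fun pos => (tag, pos))

/-- The translator `T = U(T_{0,0}, T_{0,1}, T_{0,2}, …, T_{m-1,2})` (standalone,
with `t_{i,a,pos} = (3i+a+1, pos)`). -/
def Ttrans (b : ℕ) {m : ℕ} (φ : SatInstance m) : TS (ℕ × ℕ) Ev :=
  TS.unionFam (fun q : Fin m × Fin 3 => Tgad b (3 * (q.1 : ℕ) + (q.2 : ℕ) + 1) φ q.1 q.2)

/-- `H_3`, with `h_{3,0,i} = (0,i)` and `h_{3,1,i} = (1,i)`: the union of the path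
`h_{3,0,0} --k^b--> h_{3,0,b}` and the path
`h_{3,0,0} --u--> h_{3,1,0} --k^{b-1}--> h_{3,1,b-1} --z--> h_{3,0,b}`. -/
def H3 (b : ℕ) : TS (ℕ × ℕ) Ev :=
  TS.unionFam (fun c : Bool =>
    if c then (TS.chain (List.replicate b Ev.k)).mapStates (fun i => (0, i))
    else (TS.chain ([Ev.u] ++ List.replicate (b-1) Ev.k ++ [Ev.z])).mapStates
      (fun i => if i = 0 then (0, 0) else if i = b + 1 then (0, b) else (1, i - 1)))

/-- The set `E_0 = {(m,m) : 1 ≤ m ≤ b} ∪ {0}`. -/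
def Ezero (b : ℕ) : Set Tev :=
  {e | (∃ q, 1 ≤ q ∧ q ≤ b ∧ e = Tev.pr q q) ∨ e = Tev.gr 0}

/-- The first row `f_{j,0,0} --k^b--> f_{j,0,b}` of `F_j`, with `f_{j,0,i} = (4j+2, i)`. -/
def Fch0 (b j : ℕ) : TS (ℕ × ℕ) Ev :=
  (TS.chain (List.replicate b Ev.k)).mapStates (fun i => (4 * j + 2, i))

/-- The second row `f_{j,0,0} --v_j--> f_{j,1,0} --k^{b-1}--> f_{j,1,b-1} --X_j--> f_{j,0,b}`
of `F_j`, with `f_{j,1,i} = (4j+3, i)`. -/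
def Fch1 (b j : ℕ) : TS (ℕ × ℕ) Ev :=
  (TS.chain ([Ev.vj j] ++ List.replicate (b-1) Ev.k ++ [Ev.X j])).mapStates
    (fun i => if i = 0 then (4 * j + 2, 0) else if i = b + 1 then (4 * j + 2, b)
      else (4 * j + 3, i - 1))

/-- `F_j` as the union of its two rows. -/
def Fgad (b j : ℕ) : TS (ℕ × ℕ) Ev :=
  TS.unionFam (fun c : Bool => if c then Fch0 b j else Fch1 b j)

/-- `G_j`, with `g_{j,i} = (4j+4, i)`. -/
def Ggad (b j : ℕ) : TS (ℕ × ℕ) Ev :=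
  (TS.chain (List.replicate b Ev.k ++ [Ev.X j])).mapStates (fun i => (4 * j + 4, i))

/-- The clause gadget `T_i` (of the translator for the group-extended types),
with `t_{i,pos} = (4i+5, pos)`. -/
def Tgad2 (b : ℕ) {m : ℕ} (φ : SatInstance m) (i : Fin m) : TS (ℕ × ℕ) Ev :=
  (TS.chain (List.replicate b Ev.k ++
    [Ev.X ((φ.C i 0 : Fin m) : ℕ), Ev.X ((φ.C i 1 : Fin m) : ℕ),
     Ev.X ((φ.C i 2 : Fin m) : ℕ), Ev.z] ++ List.replicate b Ev.k)).mapStates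
    (fun pos => (4 * (i : ℕ) + 5, pos))

/-- The translator `T_τ = U(F_0, G_0, …, F_{m-1}, G_{m-1}, T_0, …, T_{m-1})`
for the group-extended types. -/
def Ttrans2fam (b : ℕ) {m : ℕ} (φ : SatInstance m) : Fin m × Fin 3 → TS (ℕ × ℕ) Ev :=
  fun q => if q.2 = 0 then Fgad b (q.1 : ℕ)
    else if q.2 = 1 then Ggad b (q.1 : ℕ) else Tgad2 b φ q.1

def Ttrans2 (b : ℕ) {m : ℕ} (φ : SatInstance m) : TS (ℕ × ℕ) Ev :=
  TS.unionFam (Ttrans2fam b φ)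
/-! ## The key unions and the unions of key and translator -/

/-- The family of constituents of the key `K_{τ^b_0} = U(H_0, D_{0,0},…,D_{6m-1,0})`. -/
def K0fam (b m : ℕ) : Option (Fin (6 * m)) → TS (ℕ × ℕ) Ev
  | none => H0 b
  | some j => D0 b (j : ℕ)

def K0 (b m : ℕ) : TS (ℕ × ℕ) Ev := TS.unionFam (K0fam b m)

/-- The family of constituents of the key `K_{τ^b_1} = U(H_1, D_{0,1},…,D_{6m-1,1})`. -/
def K1fam (b m : ℕ) : Option (Fin (6 * m)) → TS (ℕ × ℕ) Ev
  | none => H1 b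
  | some j => D1 b (j : ℕ)

def K1 (b m : ℕ) : TS (ℕ × ℕ) Ev := TS.unionFam (K1fam b m)

/-- The family of constituents of the key `K = U(H_2, D_{0,1},…,D_{6m-1,1})`. -/
def K2fam (b m : ℕ) : Option (Fin (6 * m)) → TS (ℕ × ℕ) Ev
  | none => H2 b
  | some j => D1 b (j : ℕ)

def K2 (b m : ℕ) : TS (ℕ × ℕ) Ev := TS.unionFam (K2fam b m)

/-- The family of constituents of `U_{τ^b_0} = U(H_0, D_{0,0},…,D_{6m-1,0}, T)`. -/
def U0fam (b : ℕ) {m : ℕ} (φ : SatInstance m) :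
    Option (Fin (6 * m) ⊕ Fin m × Fin 3) → TS (ℕ × ℕ) Ev
  | none => H0 b
  | some (.inl j) => D0 b (j : ℕ)
  | some (.inr q) => Tgad b (6 * m + 1 + 3 * (q.1 : ℕ) + (q.2 : ℕ)) φ q.1 q.2

def U0 (b : ℕ) {m : ℕ} (φ : SatInstance m) : TS (ℕ × ℕ) Ev := TS.unionFam (U0fam b φ)

/-- The family of constituents of `U_{τ^b_1} = U(H_1, D_{0,1},…,D_{6m-1,1}, T)`. -/
def U1fam (b : ℕ) {m : ℕ} (φ : SatInstance m) :
    Option (Fin (6 * m) ⊕ Fin m × Fin 3) → TS (ℕ × ℕ) Ev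
  | none => H1 b
  | some (.inl j) => D1 b (j : ℕ)
  | some (.inr q) => Tgad b (6 * m + 1 + 3 * (q.1 : ℕ) + (q.2 : ℕ)) φ q.1 q.2

def U1 (b : ℕ) {m : ℕ} (φ : SatInstance m) : TS (ℕ × ℕ) Ev := TS.unionFam (U1fam b φ)

/-- The family of constituents of `W = U(H_2, D_{0,1},…,D_{6m-1,1}, T)`. -/
def Wfam (b : ℕ) {m : ℕ} (φ : SatInstance m) :
    Option (Fin (6 * m) ⊕ Fin m × Fin 3) → TS (ℕ × ℕ) Ev
  | none => H2 b
  | some (.inl j) => D1 b (j : ℕ)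
  | some (.inr q) => Tgad b (6 * m + 1 + 3 * (q.1 : ℕ) + (q.2 : ℕ)) φ q.1 q.2

def Wun (b : ℕ) {m : ℕ} (φ : SatInstance m) : TS (ℕ × ℕ) Ev := TS.unionFam (Wfam b φ)

/-- The family of constituents of
`U_τ = U(H_3, F_0, G_0, …, F_{m-1}, G_{m-1}, T_0, …, T_{m-1})` for `τ ∈ {τ^b_2, τ^b_3}`. -/
def U2fam (b : ℕ) {m : ℕ} (φ : SatInstance m) :
    Option (Fin m × Fin 3) → TS (ℕ × ℕ) Ev
  | none => H3 b
  | some q => Ttrans2fam b φ q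

def U2 (b : ℕ) {m : ℕ} (φ : SatInstance m) : TS (ℕ × ℕ) Ev := TS.unionFam (U2fam b φ)

/-! ## The joining `A(U)` -/

/-- The joining `A(U)` of a union `U = U(A_0,…,A_n)` of initialized TSs (`A_i`
initialized at `s0 i`): fresh connector states `q_i = Sum.inr i`, fresh events
`w_{i+1} = Sum.inr (Sum.inl i)` (`i : Fin n`) and `y_i = Sum.inr (Sum.inr i)`,
and transitions `q_i --w_{i+1}--> q_{i+1}` and `q_i --y_i--> s0 i`. -/
def joining {S E : Type} {n : ℕ} (F : Fin (n + 1) → TS S E) (s0 : Fin (n + 1) → S)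
    (h0 : ∀ i, s0 i ∈ (F i).states) :
    TS (S ⊕ Fin (n + 1)) (E ⊕ (Fin n ⊕ Fin (n + 1))) where
  states := {st | (∃ a ∈ (TS.unionFam F).states, st = Sum.inl a) ∨ ∃ q, st = Sum.inr q}
  events := {ev | (∃ e ∈ (TS.unionFam F).events, ev = Sum.inl e) ∨ ∃ c, ev = Sum.inr c}
  tr st ev st' :=
    (∃ a e a', (TS.unionFam F).tr a e a' ∧
        st = Sum.inl a ∧ ev = Sum.inl e ∧ st' = Sum.inl a') ∨
    (∃ i : Fin n, st = Sum.inr i.castSucc ∧ ev = Sum.inr (Sum.inl i) ∧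
        st' = Sum.inr i.succ) ∨
    (∃ i : Fin (n + 1), st = Sum.inr i ∧ ev = Sum.inr (Sum.inr i) ∧
        st' = Sum.inl (s0 i))
  tr_mem := by
    rintro st ev st' (⟨a, e, a', h, rfl, rfl, rfl⟩ | ⟨i, rfl, rfl, rfl⟩ | ⟨i, rfl, rfl, rfl⟩)
    · obtain ⟨h1, h2, h3⟩ := (TS.unionFam F).tr_mem h
      exact ⟨Or.inl ⟨a, h1, rfl⟩, Or.inl ⟨e, h2, rfl⟩, Or.inl ⟨a', h3, rfl⟩⟩
    · exact ⟨Or.inr ⟨_, rfl⟩, Or.inr ⟨_, rfl⟩, Or.inr ⟨_, rfl⟩⟩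
    · exact ⟨Or.inr ⟨_, rfl⟩, Or.inr ⟨_, rfl⟩,
        Or.inl ⟨_, Set.mem_iUnion.2 ⟨i, h0 i⟩, rfl⟩⟩

/-! ### Auxiliary lemmas -/

lemma chain_tr' {E : Type} {w : List E} {s : ℕ} {e : E} (h : w[s]? = some e) :
    (TS.chain w).tr s e (s + 1) := ⟨h, rfl⟩

lemma mapStates_tr' {S S' E : Type} (f : S → S') {A : TS S E} {a : S} {e : E} {a' : S}
    (h : A.tr a e a') : (A.mapStates f).tr (f a) e (f a') := ⟨a, a', h, rfl, rfl⟩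

lemma unionFam_tr' {ι S E : Type} {F : ι → TS S E} (i : ι) {s : S} {e : E} {s' : S}
    (h : (F i).tr s e s') : (TS.unionFam F).tr s e s' := ⟨i, h⟩

lemma step_pr {b s s' m n : ℕ} (h : tevStep b s (Tev.pr m n) = some s') :
    m ≤ s ∧ s - m + n ≤ b ∧ s' = s - m + n := by
  simp only [tevStep] at h
  split_ifs at h with hc
  · simp only [Option.some.injEq] at h
    exact ⟨hc.1, hc.2, h.symm⟩

lemma step_gr {b s s' c : ℕ} (h : tevStep b s (Tev.gr c) = some s') :
    s' = (s + c) % (b + 1) := by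
  simp only [tevStep, Option.some.injEq] at h
  omega

lemma getrep {E : Type} {n i : ℕ} {a : E} (h : i < n) :
    (List.replicate n a)[i]? = some a := by
  rw [List.getElem?_eq_getElem (by simpa using h), List.getElem_replicate]

lemma getapp_left {E : Type} {A B : List E} {i : ℕ} {e : E} (h : A[i]? = some e) :
    (A ++ B)[i]? = some e := by
  rw [List.getElem?_append_left (List.getElem?_eq_some_iff.mp h).1]
  exact h

lemma getapp_right {E : Type} (A : List E) {B : List E} {i : ℕ} {e : E}
    (h : B[i]? = some e) : (A ++ B)[A.length + i]? = some e := by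
  rw [List.getElem?_append_right (Nat.le_add_right _ _)]
  simpa using h


lemma get_at {E : Type} (A B : List E) (i : ℕ) {j : ℕ} {e : E} (hj : j = A.length + i)
    (h : B[i]? = some e) : (A ++ B)[j]? = some e := hj ▸ getapp_right A h

lemma mod_small_cases {b x : ℕ} (hx : x < 2 * (b + 1)) :
    x % (b + 1) = if x < b + 1 then x else x - (b + 1) := by
  split_ifs with h
  · exact Nat.mod_eq_of_lt h
  · rw [Nat.mod_eq_sub_mod (by omega)]
    exact Nat.mod_eq_of_lt (by omega)

lemma fam_F (b : ℕ) {m : ℕ} (φ : SatInstance m) (v : Fin m) :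
    Ttrans2fam b φ (v, 0) = Fgad b (v : ℕ) := rfl

lemma fam_G (b : ℕ) {m : ℕ} (φ : SatInstance m) (v : Fin m) :
    Ttrans2fam b φ (v, 1) = Ggad b (v : ℕ) := rfl

lemma fam_T (b : ℕ) {m : ℕ} (φ : SatInstance m) (v : Fin m) :
    Ttrans2fam b φ (v, 2) = Tgad2 b φ v := rfl

section Trans
variable (b : ℕ) {m : ℕ} (φ : SatInstance m) (v : Fin m)

lemma G_tr_k {i : ℕ} (hi : i < b) :
    (Ttrans2 b φ).tr (4 * (v : ℕ) + 4, i) Ev.k (4 * (v : ℕ) + 4, i + 1) := by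
  refine unionFam_tr' (v, 1) ?_
  rw [fam_G]
  exact mapStates_tr' _ (chain_tr' (getapp_left (getrep hi)))

lemma G_tr_X :
    (Ttrans2 b φ).tr (4 * (v : ℕ) + 4, b) (Ev.X (v : ℕ)) (4 * (v : ℕ) + 4, b + 1) := by
  refine unionFam_tr' (v, 1) ?_
  rw [fam_G]
  exact mapStates_tr' _ (chain_tr' (get_at _ [Ev.X (v : ℕ)] 0 (by simp) (by simp)))

lemma F0_tr_k {i : ℕ} (hi : i < b) :
    (Ttrans2 b φ).tr (4 * (v : ℕ) + 2, i) Ev.k (4 * (v : ℕ) + 2, i + 1) := by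
  refine unionFam_tr' (v, 0) ?_
  rw [fam_F]
  refine unionFam_tr' true ?_
  simp only [if_true]
  exact mapStates_tr' _ (chain_tr' (getrep hi))

lemma F1_tr_v (hb : 2 ≤ b) :
    (Ttrans2 b φ).tr (4 * (v : ℕ) + 2, 0) (Ev.vj (v : ℕ)) (4 * (v : ℕ) + 3, 0) := by
  refine unionFam_tr' (v, 0) ?_
  rw [fam_F]
  refine unionFam_tr' false ?_
  simp only [Bool.false_eq_true, if_false]
  refine ⟨0, 1, chain_tr' (getapp_left (getapp_left (by simp))), by simp, ?_⟩
  have h1 : (1 : ℕ) ≠ 0 := by omega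
  have h2 : (1 : ℕ) ≠ b + 1 := by omega
  simp [h1, h2]; omega

lemma F1_tr_k {i : ℕ} (hi : i + 1 < b) :
    (Ttrans2 b φ).tr (4 * (v : ℕ) + 3, i) Ev.k (4 * (v : ℕ) + 3, i + 1) := by
  refine unionFam_tr' (v, 0) ?_
  rw [fam_F]
  refine unionFam_tr' false ?_
  simp only [Bool.false_eq_true, if_false]
  have h1 : (i + 1 : ℕ) ≠ 0 := by omega
  have h2 : (i + 1 : ℕ) ≠ b + 1 := by omega
  have h3 : (i + 2 : ℕ) ≠ 0 := by omega
  have h4 : (i + 2 : ℕ) ≠ b + 1 := by omega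
  refine ⟨i + 1, i + 2, chain_tr' ?_, by simp [h1, h2]; omega, by simp [h3, h4]⟩
  exact getapp_left (get_at [Ev.vj (v : ℕ)] _ i (by simp; omega) (getrep (by omega)))

lemma F1_tr_X (hb : 2 ≤ b) :
    (Ttrans2 b φ).tr (4 * (v : ℕ) + 3, b - 1) (Ev.X (v : ℕ)) (4 * (v : ℕ) + 2, b) := by
  refine unionFam_tr' (v, 0) ?_
  rw [fam_F]
  refine unionFam_tr' false ?_
  simp only [Bool.false_eq_true, if_false]
  have h1 : (b : ℕ) ≠ 0 := by omega
  have h2 : (b : ℕ) ≠ b + 1 := by omega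
  refine ⟨b, b + 1, chain_tr' ?_, by simp [h1, h2], by simp⟩
  exact get_at ([Ev.vj (v : ℕ)] ++ List.replicate (b - 1) Ev.k) [Ev.X (v : ℕ)] 0
    (by simp; omega) (by simp)

lemma T_tr_k1 {p : ℕ} (hp : p < b) :
    (Ttrans2 b φ).tr (4 * (v : ℕ) + 5, p) Ev.k (4 * (v : ℕ) + 5, p + 1) := by
  refine unionFam_tr' (v, 2) ?_
  rw [fam_T]
  exact mapStates_tr' _ (chain_tr' (getapp_left (getapp_left (getrep hp))))

lemma T_tr_X (r : Fin 3) :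
    (Ttrans2 b φ).tr (4 * (v : ℕ) + 5, b + (r : ℕ))
      (Ev.X ((φ.C v r : Fin m) : ℕ)) (4 * (v : ℕ) + 5, b + (r : ℕ) + 1) := by
  refine unionFam_tr' (v, 2) ?_
  rw [fam_T]
  refine mapStates_tr' _ (chain_tr' (getapp_left ?_))
  fin_cases r
  · exact get_at _ _ 0 (by simp) (by simp)
  · exact get_at _ _ 1 (by simp) (by simp)
  · exact get_at _ _ 2 (by simp) (by simp)

lemma T_tr_z :
    (Ttrans2 b φ).tr (4 * (v : ℕ) + 5, b + 3) Ev.z (4 * (v : ℕ) + 5, b + 4) := by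
  refine unionFam_tr' (v, 2) ?_
  rw [fam_T]
  exact mapStates_tr' _ (chain_tr' (getapp_left (get_at _ _ 3 (by simp) (by simp))))

lemma T_tr_k2 {p : ℕ} (hp : p < b) :
    (Ttrans2 b φ).tr (4 * (v : ℕ) + 5, b + 4 + p) Ev.k (4 * (v : ℕ) + 5, b + 4 + p + 1) := by
  refine unionFam_tr' (v, 2) ?_
  rw [fam_T]
  refine mapStates_tr' _ (chain_tr' ?_)
  exact get_at _ _ p (by simp) (getrep hp)

end Trans

section Chains
variable {b t : ℕ} {m : ℕ} {φ : SatInstance m} (R : Region b t (Ttrans2 b φ))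

lemma kchain_up (hk : R.sig Ev.k = Tev.pr 0 1) (st : ℕ → ℕ × ℕ) (r : ℕ) (hr : 1 ≤ r)
    (htr : ∀ i < r, (Ttrans2 b φ).tr (st i) Ev.k (st (i + 1))) :
    (∀ i ≤ r, R.sup (st i) = R.sup (st 0) + i) ∧ R.sup (st 0) + r ≤ b := by
  have key : ∀ i ≤ r, R.sup (st i) = R.sup (st 0) + i ∧
      (1 ≤ i → R.sup (st 0) + i ≤ b) := by
    intro i hi
    induction i with
    | zero => exact ⟨rfl, by omega⟩
    | succ n ih =>
      obtain ⟨e1, _⟩ := ih (by omega)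
      have h1 := R.resp (htr n (by omega))
      rw [hk] at h1
      obtain ⟨h2, h3, h4⟩ := step_pr h1
      omega
  exact ⟨fun i hi => (key i hi).1, (key r le_rfl).2 hr⟩

lemma kchain_down (hk : R.sig Ev.k = Tev.pr 1 0) (st : ℕ → ℕ × ℕ) (r : ℕ)
    (htr : ∀ i < r, (Ttrans2 b φ).tr (st i) Ev.k (st (i + 1))) :
    (∀ i ≤ r, R.sup (st i) + i = R.sup (st 0)) ∧ r ≤ R.sup (st 0) := by
  have key : ∀ i ≤ r, R.sup (st i) + i = R.sup (st 0) ∧ i ≤ R.sup (st 0) := by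
    intro i hi
    induction i with
    | zero => exact ⟨rfl, by omega⟩
    | succ n ih =>
      obtain ⟨e1, e2⟩ := ih (by omega)
      have h1 := R.resp (htr n (by omega))
      rw [hk] at h1
      obtain ⟨h2, h3, h4⟩ := step_pr h1
      omega
  exact ⟨fun i hi => (key i hi).1, (key r le_rfl).2⟩

end Chains

/-- Completeness of the translator `T_τ`, `τ ∈ {τ^b_2, τ^b_3}`:
if a `τ`-region of `T_τ` satisfies `sig(z) ∈ E_0` and `sig(k) ∈ {(0,1),(1,0)}`, then
`φ` has a one-in-three model. -/
theorem stmt11 (b t : ℕ) (hb : 2 ≤ b) (ht : t = 2 ∨ t = 3)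
    {m : ℕ} (hm : 1 ≤ m) (φ : SatInstance m)
    (R : Region b t (Ttrans2 b φ))
    (hz : R.sig Ev.z ∈ Ezero b)
    (hk : R.sig Ev.k = Tev.pr 0 1 ∨ R.sig Ev.k = Tev.pr 1 0) :
    ∃ M : Set (Fin m), φ.model M := by
  classical
  set M : Set (Fin m) := {v : Fin m | ∃ c, R.sig (Ev.X (v : ℕ)) = Tev.gr c ∧ c ≠ 0}
    with hM
  have memM : ∀ v : Fin m,
      v ∈ M ↔ ∃ c, R.sig (Ev.X (v : ℕ)) = Tev.gr c ∧ c ≠ 0 := by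
    intro v; rw [hM]; exact Iff.rfl
  refine ⟨M, fun i => ?_⟩
  rcases hk with hk | hk
  · -- sig k = (0,1)
    have XP : ∀ v : Fin m, ∀ s s', s ≤ b →
        tevStep b s (R.sig (Ev.X (v : ℕ))) = some s' →
        ((v ∈ M → (s = b ∧ s' = 0) ∨ (s < b ∧ s' = s + 1)) ∧ (v ∉ M → s' = s)) := by
      intro v
      obtain ⟨hG1, hG2⟩ := kchain_up R hk (fun p => (4 * (v : ℕ) + 4, p)) b (by omega)
        (fun p hp => G_tr_k b φ v hp)
      have hGb : R.sup (4 * (v : ℕ) + 4, b) = R.sup (4 * (v : ℕ) + 4, 0) + b :=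
        hG1 b le_rfl
      have hGbv : R.sup (4 * (v : ℕ) + 4, b) = b := by omega
      have hGX := R.resp (G_tr_X b φ v)
      rw [hGbv] at hGX
      obtain ⟨hF1, hF2⟩ := kchain_up R hk (fun p => (4 * (v : ℕ) + 2, p)) b (by omega)
        (fun p hp => F0_tr_k b φ v hp)
      have hFb : R.sup (4 * (v : ℕ) + 2, b) = R.sup (4 * (v : ℕ) + 2, 0) + b :=
        hF1 b le_rfl
      have hFbv : R.sup (4 * (v : ℕ) + 2, b) = b := by omega
      obtain ⟨hH1, hH2⟩ := kchain_up R hk (fun p => (4 * (v : ℕ) + 3, p)) (b - 1)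
        (by omega) (fun p hp => F1_tr_k b φ v (by omega))
      have hHb : R.sup (4 * (v : ℕ) + 3, b - 1) = R.sup (4 * (v : ℕ) + 3, 0) + (b - 1) :=
        hH1 (b - 1) le_rfl
      have hFX := R.resp (F1_tr_X b φ v hb)
      rw [hFbv, hHb] at hFX
      have hXev : Ev.X (v : ℕ) ∈ (Ttrans2 b φ).events :=
        ((Ttrans2 b φ).tr_mem (G_tr_X b φ v)).2.1
      intro s s' hs hstep
      rcases hsig : R.sig (Ev.X (v : ℕ)) with ⟨p, q⟩ | c
      · rw [hsig] at hGX hFX hstep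
        obtain ⟨g1, g2, g3⟩ := step_pr hGX
        obtain ⟨f1, f2, f3⟩ := step_pr hFX
        obtain ⟨e1, e2, e3⟩ := step_pr hstep
        have hnotM : v ∉ M := by
          intro hv
          obtain ⟨c, hc, -⟩ := (memM v).mp hv
          rw [hsig] at hc
          exact Tev.noConfusion hc
        exact ⟨fun hv => absurd hv hnotM, fun _ => by omega⟩
      · rw [hsig] at hFX hstep
        have f3 := step_gr hFX
        have hcb : c ≤ b := by
          have hok := R.sig_ok _ hXev
          rw [hsig] at hok
          exact hok.1
        rw [mod_small_cases (by omega)] at f3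
        have e3 := step_gr hstep
        rw [mod_small_cases (by omega)] at e3
        constructor
        · intro hv
          obtain ⟨c', hc', hcne⟩ := (memM v).mp hv
          rw [hsig, Tev.gr.injEq] at hc'
          subst hc'
          split_ifs at f3 e3 <;> omega
        · intro hv
          have hc0 : c = 0 := by
            by_contra hcn
            exact hv ((memM v).mpr ⟨c, hsig, hcn⟩)
          subst hc0
          split_ifs at f3 e3 <;> omega
    -- clause analysis
    obtain ⟨hT1, hT2⟩ := kchain_up R hk (fun p => (4 * (i : ℕ) + 5, p)) b (by omega)
      (fun p hp => T_tr_k1 b φ i hp)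
    have htb0 : R.sup (4 * (i : ℕ) + 5, b) = R.sup (4 * (i : ℕ) + 5, 0) + b :=
      hT1 b le_rfl
    have htb : R.sup (4 * (i : ℕ) + 5, b) = b := by omega
    obtain ⟨hT3, hT4⟩ := kchain_up R hk (fun p => (4 * (i : ℕ) + 5, b + 4 + p)) b
      (by omega) (fun p hp => T_tr_k2 b φ i hp)
    have hT4' : R.sup (4 * (i : ℕ) + 5, b + 4) + b ≤ b := hT4
    have htb4 : R.sup (4 * (i : ℕ) + 5, b + 4) = 0 := by omega
    have hs3le : R.sup (4 * (i : ℕ) + 5, b + 3) ≤ b :=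
      R.sup_le _ ((Ttrans2 b φ).tr_mem (T_tr_z b φ i)).1
    have hz3 : R.sup (4 * (i : ℕ) + 5, b + 3) = 0 := by
      have hzr := R.resp (T_tr_z b φ i)
      rw [htb4] at hzr
      rcases hz with ⟨q, hq1, hq2, hq3⟩ | hz0
      · rw [hq3] at hzr
        obtain ⟨z1, z2, z3⟩ := step_pr hzr
        omega
      · rw [hz0] at hzr
        have hzz := step_gr hzr
        rw [mod_small_cases (by omega)] at hzz
        split_ifs at hzz <;> omega
    have hs1le : R.sup (4 * (i : ℕ) + 5, b + 1) ≤ b :=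
      R.sup_le _ ((Ttrans2 b φ).tr_mem (T_tr_X b φ i 0)).2.2
    have hs2le : R.sup (4 * (i : ℕ) + 5, b + 2) ≤ b :=
      R.sup_le _ ((Ttrans2 b φ).tr_mem (T_tr_X b φ i 1)).2.2
    have hx0 : tevStep b (R.sup (4 * (i : ℕ) + 5, b))
        (R.sig (Ev.X ((φ.C i 0 : Fin m) : ℕ)))
        = some (R.sup (4 * (i : ℕ) + 5, b + 1)) := R.resp (T_tr_X b φ i 0)
    have hx1 : tevStep b (R.sup (4 * (i : ℕ) + 5, b + 1))
        (R.sig (Ev.X ((φ.C i 1 : Fin m) : ℕ)))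
        = some (R.sup (4 * (i : ℕ) + 5, b + 2)) := R.resp (T_tr_X b φ i 1)
    have hx2 : tevStep b (R.sup (4 * (i : ℕ) + 5, b + 2))
        (R.sig (Ev.X ((φ.C i 2 : Fin m) : ℕ)))
        = some (R.sup (4 * (i : ℕ) + 5, b + 3)) := R.resp (T_tr_X b φ i 2)
    rw [htb] at hx0
    rw [hz3] at hx2
    have E0 := XP (φ.C i 0) b _ le_rfl hx0
    have E1 := XP (φ.C i 1) _ _ hs1le hx1
    have E2 := XP (φ.C i 2) _ _ hs2le hx2
    by_cases M0 : φ.C i 0 ∈ M <;> by_cases M1 : φ.C i 1 ∈ M <;>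
      by_cases M2 : φ.C i 2 ∈ M
    · exfalso
      have a0 := E0.1 M0; have a1 := E1.1 M1; have a2 := E2.1 M2; omega
    · exfalso
      have a0 := E0.1 M0; have a1 := E1.1 M1; have a2 := E2.2 M2; omega
    · exfalso
      have a0 := E0.1 M0; have a1 := E1.2 M1; have a2 := E2.1 M2; omega
    · refine ⟨0, M0, ?_⟩
      intro r hr
      fin_cases r
      · rfl
      · exact absurd hr M1
      · exact absurd hr M2
    · exfalso
      have a0 := E0.2 M0; have a1 := E1.1 M1; have a2 := E2.1 M2; omega
    · refine ⟨1, M1, ?_⟩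
      intro r hr
      fin_cases r
      · exact absurd hr M0
      · rfl
      · exact absurd hr M2
    · refine ⟨2, M2, ?_⟩
      intro r hr
      fin_cases r
      · exact absurd hr M0
      · exact absurd hr M1
      · rfl
    · exfalso
      have a0 := E0.2 M0; have a1 := E1.2 M1; have a2 := E2.2 M2; omega
  · -- sig k = (1,0)
    have XP : ∀ v : Fin m, ∀ s s', s ≤ b →
        tevStep b s (R.sig (Ev.X (v : ℕ))) = some s' →
        ((v ∈ M → (s = 0 ∧ s' = b) ∨ (0 < s ∧ s' = s - 1)) ∧ (v ∉ M → s' = s)) := by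
      intro v
      obtain ⟨hG1, hG2⟩ := kchain_down R hk (fun p => (4 * (v : ℕ) + 4, p)) b
        (fun p hp => G_tr_k b φ v hp)
      have hG0le : R.sup (4 * (v : ℕ) + 4, 0) ≤ b :=
        R.sup_le _ ((Ttrans2 b φ).tr_mem (G_tr_k b φ v (show 0 < b by omega))).1
      have hGb : R.sup (4 * (v : ℕ) + 4, b) + b = R.sup (4 * (v : ℕ) + 4, 0) :=
        hG1 b le_rfl
      have hGbv : R.sup (4 * (v : ℕ) + 4, b) = 0 := by omega
      have hGX := R.resp (G_tr_X b φ v)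
      rw [hGbv] at hGX
      obtain ⟨hF1, hF2⟩ := kchain_down R hk (fun p => (4 * (v : ℕ) + 2, p)) b
        (fun p hp => F0_tr_k b φ v hp)
      have hF0le : R.sup (4 * (v : ℕ) + 2, 0) ≤ b :=
        R.sup_le _ ((Ttrans2 b φ).tr_mem (F0_tr_k b φ v (show 0 < b by omega))).1
      have hFb : R.sup (4 * (v : ℕ) + 2, b) + b = R.sup (4 * (v : ℕ) + 2, 0) :=
        hF1 b le_rfl
      have hFbv : R.sup (4 * (v : ℕ) + 2, b) = 0 := by omega
      obtain ⟨hH1, hH2⟩ := kchain_down R hk (fun p => (4 * (v : ℕ) + 3, p)) (b - 1)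
        (fun p hp => F1_tr_k b φ v (by omega))
      have hH0le : R.sup (4 * (v : ℕ) + 3, 0) ≤ b :=
        R.sup_le _ ((Ttrans2 b φ).tr_mem (F1_tr_v b φ v hb)).2.2
      have hHb : R.sup (4 * (v : ℕ) + 3, b - 1) + (b - 1) = R.sup (4 * (v : ℕ) + 3, 0) :=
        hH1 (b - 1) le_rfl
      have hFX := R.resp (F1_tr_X b φ v hb)
      rw [hFbv] at hFX
      have hXev : Ev.X (v : ℕ) ∈ (Ttrans2 b φ).events :=
        ((Ttrans2 b φ).tr_mem (G_tr_X b φ v)).2.1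
      intro s s' hs hstep
      rcases hsig : R.sig (Ev.X (v : ℕ)) with ⟨p, q⟩ | c
      · exfalso
        rw [hsig] at hGX hFX
        obtain ⟨g1, g2, g3⟩ := step_pr hGX
        obtain ⟨f1, f2, f3⟩ := step_pr hFX
        have hok := R.sig_ok _ hXev
        rw [hsig] at hok
        have hnz := hok.2.2.2 ht
        omega
      · rw [hsig] at hFX hstep
        have f3 := step_gr hFX
        have hcb : c ≤ b := by
          have hok := R.sig_ok _ hXev
          rw [hsig] at hok
          exact hok.1
        rw [mod_small_cases (by omega)] at f3
        have e3 := step_gr hstep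
        rw [mod_small_cases (by omega)] at e3
        constructor
        · intro hv
          obtain ⟨c', hc', hcne⟩ := (memM v).mp hv
          rw [hsig, Tev.gr.injEq] at hc'
          subst hc'
          split_ifs at f3 e3 <;> omega
        · intro hv
          have hc0 : c = 0 := by
            by_contra hcn
            exact hv ((memM v).mpr ⟨c, hsig, hcn⟩)
          subst hc0
          split_ifs at f3 e3 <;> omega
    -- clause analysis
    obtain ⟨hT1, hT2⟩ := kchain_down R hk (fun p => (4 * (i : ℕ) + 5, p)) b
      (fun p hp => T_tr_k1 b φ i hp)
    have ht0le : R.sup (4 * (i : ℕ) + 5, 0) ≤ b :=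
      R.sup_le _ ((Ttrans2 b φ).tr_mem (T_tr_k1 b φ i (show 0 < b by omega))).1
    have htb0 : R.sup (4 * (i : ℕ) + 5, b) + b = R.sup (4 * (i : ℕ) + 5, 0) :=
      hT1 b le_rfl
    have htb : R.sup (4 * (i : ℕ) + 5, b) = 0 := by omega
    obtain ⟨hT3, hT4⟩ := kchain_down R hk (fun p => (4 * (i : ℕ) + 5, b + 4 + p)) b
      (fun p hp => T_tr_k2 b φ i hp)
    have hb4le : R.sup (4 * (i : ℕ) + 5, b + 4) ≤ b :=
      R.sup_le _ ((Ttrans2 b φ).tr_mem (T_tr_k2 b φ i (show 0 < b by omega))).1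
    have hT4' : b ≤ R.sup (4 * (i : ℕ) + 5, b + 4) := hT4
    have htb4 : R.sup (4 * (i : ℕ) + 5, b + 4) = b := by omega
    have hs3le : R.sup (4 * (i : ℕ) + 5, b + 3) ≤ b :=
      R.sup_le _ ((Ttrans2 b φ).tr_mem (T_tr_z b φ i)).1
    have hz3 : R.sup (4 * (i : ℕ) + 5, b + 3) = b := by
      have hzr := R.resp (T_tr_z b φ i)
      rw [htb4] at hzr
      rcases hz with ⟨q, hq1, hq2, hq3⟩ | hz0
      · rw [hq3] at hzr
        obtain ⟨z1, z2, z3⟩ := step_pr hzr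
        omega
      · rw [hz0] at hzr
        have hzz := step_gr hzr
        rw [mod_small_cases (by omega)] at hzz
        split_ifs at hzz <;> omega
    have hs1le : R.sup (4 * (i : ℕ) + 5, b + 1) ≤ b :=
      R.sup_le _ ((Ttrans2 b φ).tr_mem (T_tr_X b φ i 0)).2.2
    have hs2le : R.sup (4 * (i : ℕ) + 5, b + 2) ≤ b :=
      R.sup_le _ ((Ttrans2 b φ).tr_mem (T_tr_X b φ i 1)).2.2
    have hx0 : tevStep b (R.sup (4 * (i : ℕ) + 5, b))
        (R.sig (Ev.X ((φ.C i 0 : Fin m) : ℕ)))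
        = some (R.sup (4 * (i : ℕ) + 5, b + 1)) := R.resp (T_tr_X b φ i 0)
    have hx1 : tevStep b (R.sup (4 * (i : ℕ) + 5, b + 1))
        (R.sig (Ev.X ((φ.C i 1 : Fin m) : ℕ)))
        = some (R.sup (4 * (i : ℕ) + 5, b + 2)) := R.resp (T_tr_X b φ i 1)
    have hx2 : tevStep b (R.sup (4 * (i : ℕ) + 5, b + 2))
        (R.sig (Ev.X ((φ.C i 2 : Fin m) : ℕ)))
        = some (R.sup (4 * (i : ℕ) + 5, b + 3)) := R.resp (T_tr_X b φ i 2)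
    rw [htb] at hx0
    rw [hz3] at hx2
    have E0 := XP (φ.C i 0) 0 _ (by omega) hx0
    have E1 := XP (φ.C i 1) _ _ hs1le hx1
    have E2 := XP (φ.C i 2) _ _ hs2le hx2
    by_cases M0 : φ.C i 0 ∈ M <;> by_cases M1 : φ.C i 1 ∈ M <;>
      by_cases M2 : φ.C i 2 ∈ M
    · exfalso
      have a0 := E0.1 M0; have a1 := E1.1 M1; have a2 := E2.1 M2; omega
    · exfalso
      have a0 := E0.1 M0; have a1 := E1.1 M1; have a2 := E2.2 M2; omega
    · exfalso
      have a0 := E0.1 M0; have a1 := E1.2 M1; have a2 := E2.1 M2; omega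
    · refine ⟨0, M0, ?_⟩
      intro r hr
      fin_cases r
      · rfl
      · exact absurd hr M1
      · exact absurd hr M2
    · exfalso
      have a0 := E0.2 M0; have a1 := E1.1 M1; have a2 := E2.1 M2; omega
    · refine ⟨1, M1, ?_⟩
      intro r hr
      fin_cases r
      · exact absurd hr M0
      · rfl
      · exact absurd hr M2
    · refine ⟨2, M2, ?_⟩
      intro r hr
      fin_cases r
      · exact absurd hr M0
      · exact absurd hr M1
      · rfl
    · exfalso
      have a0 := E0.2 M0; have a1 := E1.2 M1; have a2 := E2.2 M2; omega
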